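/- arXiv:2603.23131 — 3 statements merged into one kernel-verified Lean document; each statement's English description precedes it below -/
import Mathlib

section
/- Derivative of an STP-quadratic form: let A be a real p×q matrix, n ≥ 1, l = lcm(q,n), and t = lcm(pl/q, n). Define F : ℝⁿ → Matrix (Fin (pl/q)) (Fin (l/n)) ℝ by F(x) = (A ⊗ I_{l/q})(X ⊗ I_{l/n}) (the semi-tensor product A ⋉ x), and define the STP-quadratic map Q(x) := (Xᵀ ⊗ I_{t/n}) · (F(x) ⊗ I_{tq/(pl)}) (the semi-tensor product xᵀ ⋉ A ⋉ x), where X is the n×1 column matrix of x. Then at every x ∈ ℝⁿ the Fréchet derivative of Q in direction h ∈ ℝⁿ equals (Hᵀ ⊗ I_{t/n})(F(x) ⊗ I_{tq/(pl)}) + (Xᵀ ⊗ I_{t/n})(F(h) ⊗ I_{tq/(pl)}); equivalently, the partial derivative of Q with respect to x_i is (E_iᵀ ⊗ I_{t/n})(F(x) ⊗ I_{tq/(pl)}) + (Xᵀ ⊗ I_{t/n})(F(e_i) ⊗ I_{tq/(pl)}), with E_i the column matrix of δ_n^i. -/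
open Matrix

noncomputable section

/-- Kronecker product of real matrices with `Fin`-indexed sizes, indices identified
via the lexicographic equivalence `Fin a × Fin b ≃ Fin (a*b)`. -/
def kron {a b c d : ℕ} (A : Matrix (Fin a) (Fin b) ℝ) (B : Matrix (Fin c) (Fin d) ℝ) :
    Matrix (Fin (a * c)) (Fin (b * d)) ℝ := fun i j =>
  A (finProdFinEquiv.symm i).1 (finProdFinEquiv.symm j).1 *
    B (finProdFinEquiv.symm i).2 (finProdFinEquiv.symm j).2

/-- Recast a matrix along equalities of its `Fin` dimensions. -/
def castM {a b c d : ℕ} (h₁ : a = b) (h₂ : c = d) (A : Matrix (Fin a) (Fin c) ℝ) :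
    Matrix (Fin b) (Fin d) ℝ := fun i j => A (finCongr h₁.symm i) (finCongr h₂.symm j)

/-- The `i`-th standard basis vector of `ℝ^k`, as a `k × 1` column matrix. -/
def eVec (k : ℕ) (i : Fin k) : Matrix (Fin k) (Fin 1) ℝ := fun j _ => if j = i then 1 else 0

/-- A vector of `ℝ^k`, as a `k × 1` column matrix. -/
def colM {k : ℕ} (x : Fin k → ℝ) : Matrix (Fin k) (Fin 1) ℝ := fun j _ => x j

attribute [local instance] Matrix.normedAddCommGroup Matrix.normedSpace

/-- The semi-tensor product `A ⋉ x` of a `p × q` matrix `A` with a vector `x ∈ ℝⁿ`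
(identified with its `n × 1` column matrix), where `l = lcm(q, n)`:
`A ⋉ x = (A ⊗ I_{l/q}) · (X ⊗ I_{l/n})`, a matrix of size `(p·l/q) × (l/n)`. -/
def stpMatVec {p q : ℕ} (n : ℕ) (A : Matrix (Fin p) (Fin q) ℝ) (x : Fin n → ℝ) :
    Matrix (Fin (p * (Nat.lcm q n / q))) (Fin (Nat.lcm q n / n)) ℝ :=
  kron A (1 : Matrix (Fin (Nat.lcm q n / q)) (Fin (Nat.lcm q n / q)) ℝ) *
    castM
      (by rw [Nat.mul_div_cancel' (Nat.dvd_lcm_right q n), Nat.mul_div_cancel' (Nat.dvd_lcm_left q n)])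
      (one_mul _)
      (kron (colM x) (1 : Matrix (Fin (Nat.lcm q n / n)) (Fin (Nat.lcm q n / n)) ℝ))

/-- `t = lcm(pl/q, n)` where `l = lcm(q, n)`. -/
def tDim (p q n : ℕ) : ℕ := Nat.lcm (p * Nat.lcm q n / q) n

/-- `s = tq/(pl)`, the size of the second identity factor in the STP-quadratic form. -/
def sDim (p q n : ℕ) : ℕ := tDim p q n * q / (p * Nat.lcm q n)

/-- Dimension bookkeeping: `n · (t/n) = (p · (l/q)) · (tq/(pl))` (both are equal to `t`). -/
lemma dim_eq (p q n : ℕ) :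
    n * (tDim p q n / n) = p * (Nat.lcm q n / q) * sDim p q n := by
  rcases Nat.eq_zero_or_pos q with hq | hq
  · subst hq
    simp [tDim, sDim, Nat.lcm]
  · have hql : q ∣ Nat.lcm q n := Nat.dvd_lcm_left q n
    have h1 : p * (Nat.lcm q n / q) = p * Nat.lcm q n / q := (Nat.mul_div_assoc p hql).symm
    have hpl : p * Nat.lcm q n = p * Nat.lcm q n / q * q := by
      rw [← h1, mul_assoc, Nat.div_mul_cancel hql]
    have hs : sDim p q n = tDim p q n / (p * Nat.lcm q n / q) := by
      have h2 : tDim p q n * q / (p * Nat.lcm q n / q * q) =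
          tDim p q n / (p * Nat.lcm q n / q) := Nat.mul_div_mul_right _ _ hq
      rw [sDim]
      conv_lhs => rw [hpl]
      exact h2
    have hnt : n ∣ tDim p q n := Nat.dvd_lcm_right _ _
    have hdt : p * Nat.lcm q n / q ∣ tDim p q n := Nat.dvd_lcm_left _ _
    rw [h1, hs, Nat.mul_div_cancel' hnt, Nat.mul_div_cancel' hdt]

/-- The bilinear building block `(Uᵀ ⊗ I_{t/n}) · ((A ⋉ v) ⊗ I_{tq/(pl)})`;
the STP-quadratic map is `Q(x) = stpQuadBil A x x = xᵀ ⋉ A ⋉ x`. -/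
def stpQuadBil {p q : ℕ} (n : ℕ) (A : Matrix (Fin p) (Fin q) ℝ) (u v : Fin n → ℝ) :
    Matrix (Fin (1 * (tDim p q n / n))) (Fin (Nat.lcm q n / n * sDim p q n)) ℝ :=
  kron (colM u)ᵀ (1 : Matrix (Fin (tDim p q n / n)) (Fin (tDim p q n / n)) ℝ) *
    castM (dim_eq p q n).symm rfl
      (kron (stpMatVec n A v) (1 : Matrix (Fin (sDim p q n)) (Fin (sDim p q n)) ℝ))

lemma kron_add_left {a b c d : ℕ} (A B : Matrix (Fin a) (Fin b) ℝ)
    (C : Matrix (Fin c) (Fin d) ℝ) : kron (A + B) C = kron A C + kron B C := by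
  ext i j; simp [kron, add_mul]

lemma kron_smul_left {a b c d : ℕ} (r : ℝ) (A : Matrix (Fin a) (Fin b) ℝ)
    (C : Matrix (Fin c) (Fin d) ℝ) : kron (r • A) C = r • kron A C := by
  ext i j; simp [kron, mul_assoc]

lemma castM_add {a b c d : ℕ} (h₁ : a = b) (h₂ : c = d) (A B : Matrix (Fin a) (Fin c) ℝ) :
    castM h₁ h₂ (A + B) = castM h₁ h₂ A + castM h₁ h₂ B := rfl

lemma castM_smul {a b c d : ℕ} (h₁ : a = b) (h₂ : c = d) (r : ℝ) (A : Matrix (Fin a) (Fin c) ℝ) :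
    castM h₁ h₂ (r • A) = r • castM h₁ h₂ A := rfl

lemma colM_add {k : ℕ} (u v : Fin k → ℝ) : colM (u + v) = colM u + colM v := rfl

lemma colM_smul {k : ℕ} (r : ℝ) (u : Fin k → ℝ) : colM (r • u) = r • colM u := rfl

lemma stpMatVec_add {p q : ℕ} (n : ℕ) (A : Matrix (Fin p) (Fin q) ℝ) (u v : Fin n → ℝ) :
    stpMatVec n A (u + v) = stpMatVec n A u + stpMatVec n A v := by
  unfold stpMatVec
  rw [colM_add, kron_add_left, castM_add]
  exact Matrix.mul_add _ _ _

lemma stpMatVec_smul {p q : ℕ} (n : ℕ) (A : Matrix (Fin p) (Fin q) ℝ) (r : ℝ) (u : Fin n → ℝ) :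
    stpMatVec n A (r • u) = r • stpMatVec n A u := by
  unfold stpMatVec
  rw [colM_smul, kron_smul_left, castM_smul]
  exact Matrix.mul_smul _ _ _

lemma stpQuadBil_add_left {p q : ℕ} (n : ℕ) (A : Matrix (Fin p) (Fin q) ℝ) (u u' v : Fin n → ℝ) :
    stpQuadBil n A (u + u') v = stpQuadBil n A u v + stpQuadBil n A u' v := by
  unfold stpQuadBil
  rw [colM_add, Matrix.transpose_add, kron_add_left, Matrix.add_mul]

lemma stpQuadBil_smul_left {p q : ℕ} (n : ℕ) (A : Matrix (Fin p) (Fin q) ℝ) (r : ℝ)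
    (u v : Fin n → ℝ) : stpQuadBil n A (r • u) v = r • stpQuadBil n A u v := by
  unfold stpQuadBil
  rw [colM_smul, Matrix.transpose_smul, kron_smul_left, Matrix.smul_mul]

lemma stpQuadBil_add_right {p q : ℕ} (n : ℕ) (A : Matrix (Fin p) (Fin q) ℝ) (u v v' : Fin n → ℝ) :
    stpQuadBil n A u (v + v') = stpQuadBil n A u v + stpQuadBil n A u v' := by
  unfold stpQuadBil
  rw [stpMatVec_add, kron_add_left, castM_add, Matrix.mul_add]

lemma stpQuadBil_smul_right {p q : ℕ} (n : ℕ) (A : Matrix (Fin p) (Fin q) ℝ) (r : ℝ)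
    (u v : Fin n → ℝ) : stpQuadBil n A u (r • v) = r • stpQuadBil n A u v := by
  unfold stpQuadBil
  rw [stpMatVec_smul, kron_smul_left, castM_smul, Matrix.mul_smul]

/-- **Derivative of an STP-quadratic form**: with `l = lcm(q,n)`, `t = lcm(pl/q, n)`,
`F(x) = A ⋉ x = (A ⊗ I_{l/q})(X ⊗ I_{l/n})` and
`Q(x) = xᵀ ⋉ A ⋉ x = (Xᵀ ⊗ I_{t/n})(F(x) ⊗ I_{tq/(pl)})`, at every `x ∈ ℝⁿ` the Fréchet
derivative of `Q` in direction `h` equals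
`(Hᵀ ⊗ I_{t/n})(F(x) ⊗ I_{tq/(pl)}) + (Xᵀ ⊗ I_{t/n})(F(h) ⊗ I_{tq/(pl)})`; equivalently the
partial derivative with respect to `xᵢ` is
`(Eᵢᵀ ⊗ I_{t/n})(F(x) ⊗ I_{tq/(pl)}) + (Xᵀ ⊗ I_{t/n})(F(eᵢ) ⊗ I_{tq/(pl)})`. -/
theorem stp_quadratic_deriv (p q n : ℕ) (hn : 1 ≤ n) (A : Matrix (Fin p) (Fin q) ℝ)
    (x : Fin n → ℝ) :
    ∃ D : (Fin n → ℝ) →L[ℝ]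
        Matrix (Fin (1 * (tDim p q n / n))) (Fin (Nat.lcm q n / n * sDim p q n)) ℝ,
      (∀ h : Fin n → ℝ, D h = stpQuadBil n A h x + stpQuadBil n A x h) ∧
        HasFDerivAt (fun y => stpQuadBil n A y y) D x ∧
        ∀ i : Fin n,
          D (fun j => if j = i then 1 else 0) =
            stpQuadBil n A (fun j => if j = i then 1 else 0) x +
              stpQuadBil n A x (fun j => if j = i then 1 else 0) := by
  classical
  set M := Matrix (Fin (1 * (tDim p q n / n))) (Fin (Nat.lcm q n / n * sDim p q n)) ℝ with hM
  let B : (Fin n → ℝ) →ₗ[ℝ] (Fin n → ℝ) →ₗ[ℝ] M :=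
    LinearMap.mk₂ ℝ (stpQuadBil n A) (stpQuadBil_add_left n A) (stpQuadBil_smul_left n A)
      (stpQuadBil_add_right n A) (stpQuadBil_smul_right n A)
  let C₀ : (Fin n → ℝ) →ₗ[ℝ] ((Fin n → ℝ) →L[ℝ] M) :=
    (LinearMap.toContinuousLinearMap :
      ((Fin n → ℝ) →ₗ[ℝ] M) ≃ₗ[ℝ] ((Fin n → ℝ) →L[ℝ] M)).toLinearMap ∘ₗ B
  let C : (Fin n → ℝ) →L[ℝ] ((Fin n → ℝ) →L[ℝ] M) := LinearMap.toContinuousLinearMap C₀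
  have hCapp : ∀ u v : Fin n → ℝ, C u v = stpQuadBil n A u v := by
    intro u v
    simp [C, C₀, B]
  have hbil : IsBoundedBilinearMap ℝ (fun y : (Fin n → ℝ) × (Fin n → ℝ) => C y.1 y.2) :=
    C.isBoundedBilinearMap
  have hf := hbil.hasFDerivAt (x, x)
  have hdiag : HasFDerivAt (fun y : Fin n → ℝ => (y, y))
      ((ContinuousLinearMap.id ℝ (Fin n → ℝ)).prod (ContinuousLinearMap.id ℝ (Fin n → ℝ))) x :=
    (hasFDerivAt_id x).prodMk (hasFDerivAt_id x)
  have hcomp : HasFDerivAt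
      ((fun y : (Fin n → ℝ) × (Fin n → ℝ) => C y.1 y.2) ∘ fun y : Fin n → ℝ => (y, y))
      ((hbil.deriv (x, x)).comp
        ((ContinuousLinearMap.id ℝ (Fin n → ℝ)).prod (ContinuousLinearMap.id ℝ (Fin n → ℝ)))) x :=
    HasFDerivAt.comp (f := fun y : Fin n → ℝ => (y, y)) x hf hdiag
  refine ⟨(hbil.deriv (x, x)).comp
    ((ContinuousLinearMap.id ℝ (Fin n → ℝ)).prod (ContinuousLinearMap.id ℝ (Fin n → ℝ))),
    ?_, ?_, ?_⟩
  · intro h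
    have hd : hbil.deriv (x, x) (h, h) = C x h + C h x := hbil.deriv_apply (x, x) (h, h)
    show hbil.deriv (x, x) (h, h) = _
    rw [hd, hCapp, hCapp]
    exact add_comm _ _
  · have heq : (fun y => stpQuadBil n A y y) =
        (fun y : (Fin n → ℝ) × (Fin n → ℝ) => C y.1 y.2) ∘ (fun y : Fin n → ℝ => (y, y)) := by
      funext y; simp [Function.comp, hCapp]
    rw [heq]
    exact hcomp
  · intro i
    have hd : hbil.deriv (x, x) ((fun j => if j = i then 1 else 0),
        (fun j => if j = i then 1 else 0)) =
        C x (fun j => if j = i then 1 else 0) + C (fun j => if j = i then 1 else 0) x :=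
      hbil.deriv_apply _ _
    show hbil.deriv (x, x) ((fun j => if j = i then 1 else 0),
        (fun j => if j = i then 1 else 0)) = _
    rw [hd, hCapp, hCapp]
    exact add_comm _ _
end
end

section
/- Algebraic embedding of the deterministic switched system (derivation of the lifted dynamics): let f : Fin M × Fin N → Fin N with structure matrix L (the logical matrix with L(δ_M^γ ⊗ δ_N^θ) = δ_N^{f(γ,θ)}), let A_j ∈ ℝ^{n×n} and B_j ∈ ℝ^{n×m} for j ∈ Fin N, let Ã = [A_1 ⋯ A_N] ∈ ℝ^{n×Nn} and B̃ = [B_1 ⋯ B_N] ∈ ℝ^{n×Nm} be the horizontal concatenations, and let Φ_N be the N-th power-reducing matrix (the N²×N logical matrix with columns δ_N^j ⊗ δ_N^j). Define 𝐀 := (L ⊗ I_n)(I_{MN} ⊗ Ã)((I_M ⊗ Φ_N) ⊗ I_n) ∈ ℝ^{Nn×MNn} and 𝐁 := (L ⊗ I_n)(I_{MN} ⊗ B̃)((I_M ⊗ Φ_N) ⊗ I_m) ∈ ℝ^{Nn×MNm}. Then for all γ ∈ Fin M, θ ∈ Fin N, x ∈ ℝⁿ, u ∈ ℝ^m: δ_N^{f(γ,θ)}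 ⊗ (A_θ x + B_θ u) = 𝐀 · (δ_M^γ ⊗ δ_N^θ ⊗ x) + 𝐁 · (δ_M^γ ⊗ δ_N^θ ⊗ u). -/
set_option maxHeartbeats 1000000


open Matrix

noncomputable section

/-- A real matrix is a *logical matrix* if each of its columns is a standard basis vector. -/
def IsLogicalMatrix {a b : ℕ} (L : Matrix (Fin a) (Fin b) ℝ) : Prop :=
  ∀ j : Fin b, ∃ i : Fin a, ∀ r : Fin a, L r j = if r = i then 1 else 0

/-- The `N`-th power-reducing matrix `Φ_N ∈ ℝ^{N² × N}`, whose `j`-th column is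
`δ_N^j ⊗ δ_N^j`. -/
def powerReducing (N : ℕ) : Matrix (Fin (N * N)) (Fin N) ℝ := fun p i =>
  if (finProdFinEquiv.symm p).1 = i ∧ (finProdFinEquiv.symm p).2 = i then 1 else 0

/-- Horizontal concatenation `[M_1 ⋯ M_N]` of a family of `n × c` matrices. -/
def hconcat {N n c : ℕ} (Ms : Fin N → Matrix (Fin n) (Fin c) ℝ) :
    Matrix (Fin n) (Fin (N * c)) ℝ := fun r p =>
  Ms (finProdFinEquiv.symm p).1 r (finProdFinEquiv.symm p).2

/-- The lifted matrix `𝐀 := (L ⊗ I_n)(I_{MN} ⊗ Ã)((I_M ⊗ Φ_N) ⊗ I_n) ∈ ℝ^{Nn × MNn}`,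
with `Ã = [A_1 ⋯ A_N]`. -/
def liftedA (M N n : ℕ) (L : Matrix (Fin N) (Fin (M * N)) ℝ)
    (A : Fin N → Matrix (Fin n) (Fin n) ℝ) : Matrix (Fin (N * n)) (Fin (M * N * n)) ℝ :=
  kron L (1 : Matrix (Fin n) (Fin n) ℝ) *
    kron (1 : Matrix (Fin (M * N)) (Fin (M * N)) ℝ) (hconcat A) *
    castM (by ring) rfl
      (kron (kron (1 : Matrix (Fin M) (Fin M) ℝ) (powerReducing N))
        (1 : Matrix (Fin n) (Fin n) ℝ))

/-- The lifted matrix `𝐁 := (L ⊗ I_n)(I_{MN} ⊗ B̃)((I_M ⊗ Φ_N) ⊗ I_m) ∈ ℝ^{Nn × MNm}`,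
with `B̃ = [B_1 ⋯ B_N]`. -/
def liftedB (M N n m : ℕ) (L : Matrix (Fin N) (Fin (M * N)) ℝ)
    (B : Fin N → Matrix (Fin n) (Fin m) ℝ) : Matrix (Fin (N * n)) (Fin (M * N * m)) ℝ :=
  kron L (1 : Matrix (Fin n) (Fin n) ℝ) *
    kron (1 : Matrix (Fin (M * N)) (Fin (M * N)) ℝ) (hconcat B) *
    castM (by ring) rfl
      (kron (kron (1 : Matrix (Fin M) (Fin M) ℝ) (powerReducing N))
        (1 : Matrix (Fin m) (Fin m) ℝ))


open Finset in
lemma sum_fin_mul {a b : ℕ} (g : Fin (a*b) → ℝ) :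
    ∑ k, g k = ∑ i : Fin a, ∑ j : Fin b, g (finProdFinEquiv (i,j)) := by
  rw [← finProdFinEquiv.sum_comp, Fintype.sum_prod_type]

@[simp] lemma finCongr_e_assoc {a b c : ℕ} (h : a*b*c = a*(b*c)) (i : Fin a) (j : Fin b) (k : Fin c) :
    finCongr h (finProdFinEquiv (finProdFinEquiv (i,j), k)) =
      finProdFinEquiv (i, finProdFinEquiv (j,k)) := by
  apply Fin.ext; simp [finProdFinEquiv]; ring

@[simp] lemma finCongr_e_assoc' {a b c : ℕ} (h : a*(b*c) = a*b*c) (i : Fin a) (j : Fin b) (k : Fin c) :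
    finCongr h (finProdFinEquiv (i, finProdFinEquiv (j,k))) =
      finProdFinEquiv (finProdFinEquiv (i,j), k) := by
  apply Fin.ext; simp [finProdFinEquiv]; ring

@[simp] lemma finCongr_e_mid {a b c d : ℕ} (h : a*b*(c*d) = a*(b*c)*d)
    (i : Fin a) (j : Fin b) (k : Fin c) (l : Fin d) :
    finCongr h (finProdFinEquiv (finProdFinEquiv (i,j), finProdFinEquiv (k,l))) =
      finProdFinEquiv (finProdFinEquiv (i, finProdFinEquiv (j,k)), l) := by
  apply Fin.ext; simp [finProdFinEquiv]; ring

/-- **Algebraic embedding of the deterministic switched system**: if `L` is the structure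
matrix of `f : Fin M × Fin N → Fin N`, then for all `γ, θ, x, u`:
`δ_N^{f(γ,θ)} ⊗ (A_θ x + B_θ u) = 𝐀 (δ_M^γ ⊗ δ_N^θ ⊗ x) + 𝐁 (δ_M^γ ⊗ δ_N^θ ⊗ u)`. -/
theorem deterministic_lifted_dynamics (M N n m : ℕ)
    (f : Fin M × Fin N → Fin N) (L : Matrix (Fin N) (Fin (M * N)) ℝ)
    (hL : IsLogicalMatrix L)
    (hLf : ∀ (γ : Fin M) (θ : Fin N),
      L * castM rfl (one_mul 1) (kron (eVec M γ) (eVec N θ)) = eVec N (f (γ, θ)))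
    (A : Fin N → Matrix (Fin n) (Fin n) ℝ) (B : Fin N → Matrix (Fin n) (Fin m) ℝ)
    (γ : Fin M) (θ : Fin N) (x : Fin n → ℝ) (u : Fin m → ℝ) :
    castM rfl (one_mul 1) (kron (eVec N (f (γ, θ))) (colM (A θ *ᵥ x + B θ *ᵥ u))) =
      liftedA M N n L A *
          castM (by ring) (by norm_num) (kron (eVec M γ) (kron (eVec N θ) (colM x))) +
        liftedB M N n m L B *
          castM (by ring) (by norm_num) (kron (eVec M γ) (kron (eVec N θ) (colM u))) := by
  have hLe : ∀ s : Fin N, L s (finProdFinEquiv (γ, θ)) = (if s = f (γ, θ) then 1 else 0) := by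
    intro s
    have h := congrFun (congrFun (hLf γ θ) s) 0
    simp only [Matrix.mul_apply, castM, kron, eVec, finCongr_refl, Equiv.refl_apply,
      Equiv.symm_apply_apply, sum_fin_mul] at h
    simpa [mul_ite, ite_and] using h
  rw [show liftedA M N n L A = (kron L (1 : Matrix (Fin n) (Fin n) ℝ) *
      kron (1 : Matrix (Fin (M * N)) (Fin (M * N)) ℝ) (hconcat A) : Matrix _ _ ℝ) *
      (castM (by ring) rfl (kron (kron (1 : Matrix (Fin M) (Fin M) ℝ) (powerReducing N))
        (1 : Matrix (Fin n) (Fin n) ℝ)) : Matrix (Fin (M * N * (N * n))) (Fin (M * N * n)) ℝ)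
      from rfl,
    show liftedB M N n m L B = (kron L (1 : Matrix (Fin n) (Fin n) ℝ) *
      kron (1 : Matrix (Fin (M * N)) (Fin (M * N)) ℝ) (hconcat B) : Matrix _ _ ℝ) *
      (castM (by ring) rfl (kron (kron (1 : Matrix (Fin M) (Fin M) ℝ) (powerReducing N))
        (1 : Matrix (Fin m) (Fin m) ℝ)) : Matrix (Fin (M * N * (N * m))) (Fin (M * N * m)) ℝ)
      from rfl]
  ext i j
  obtain ⟨⟨s, r⟩, rfl⟩ := finProdFinEquiv.surjective i
  simp only [Matrix.add_apply, Matrix.mul_apply, liftedA, liftedB]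
  erw [Matrix.mul_apply, Matrix.mul_apply]
  simp only [sum_fin_mul]
  simp only [castM, kron, eVec, colM, hconcat, powerReducing, Matrix.one_apply, finCongr_refl,
    Equiv.refl_apply, finCongr_e_assoc, finCongr_e_assoc', finCongr_e_mid,
    Equiv.symm_apply_apply, Matrix.mulVec, dotProduct, Pi.add_apply]
  simp only [Matrix.mul_apply, sum_fin_mul]
  simp only [castM, kron, eVec, colM, hconcat, powerReducing, Matrix.one_apply, finCongr_refl,
    Equiv.refl_apply, finCongr_e_assoc, finCongr_e_assoc', finCongr_e_mid,
    Equiv.symm_apply_apply, Matrix.mulVec, dotProduct, Pi.add_apply]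
  simp [hLe, mul_ite, ite_mul, ite_and, Finset.mul_sum, Finset.sum_ite_eq, Finset.sum_ite_eq',
    mul_add, add_mul, Finset.sum_add_distrib, mul_comm, mul_left_comm]
end
end

section
/- Algebraic embedding of the stochastic switched system (derivation of the stochastic lifted dynamics): let f_i : Fin M × Fin N → Fin N for i ∈ Fin ℓ have structure matrices L_i (logical matrices with L_i(δ_M^γ ⊗ δ_N^θ) = δ_N^{f_i(γ,θ)}), let L̃ = [L_1 ⋯ L_ℓ] ∈ ℝ^{N×ℓMN} be their horizontal concatenation, let A_j ∈ ℝ^{n×n}, B_j ∈ ℝ^{n×m}, F_j ∈ ℝ^{n×r} for j ∈ Fin N, and let Ã, B̃, F̃ be the horizontal concatenations [A_1 ⋯ A_N], [B_1 ⋯ B_N], [F_1 ⋯ F_N]. With Φ_N the N-th power-reducing matrix, define 𝐀̃ := (L̃ ⊗ I_n)(I_{ℓMN} ⊗ Ã)((I_{ℓM} ⊗ Φ_N) ⊗ I_n), 𝐁̃ := (L̃ ⊗ I_n)(I_{ℓMN} ⊗ B̃)((I_{ℓM} ⊗ Φ_N) ⊗ I_m), and 𝐅̃ := (L̃ ⊗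 I_n)(I_{ℓMN} ⊗ F̃)((I_{ℓM} ⊗ Φ_N) ⊗ I_r). Then for all i ∈ Fin ℓ, γ ∈ Fin M, θ ∈ Fin N, x ∈ ℝⁿ, u ∈ ℝ^m, w ∈ ℝ^r: δ_N^{f_i(γ,θ)} ⊗ (A_θ x + B_θ u + F_θ w) = 𝐀̃ (δ_ℓ^i ⊗ δ_M^γ ⊗ δ_N^θ ⊗ x) + 𝐁̃ (δ_ℓ^i ⊗ δ_M^γ ⊗ δ_N^θ ⊗ u) + 𝐅̃ (δ_ℓ^i ⊗ δ_M^γ ⊗ δ_N^θ ⊗ w). -/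
open Matrix

set_option maxHeartbeats 1600000

noncomputable section

/-- The stochastic lifted matrix `(L̃ ⊗ I_n)(I_{ℓMN} ⊗ M̃)((I_{ℓM} ⊗ Φ_N) ⊗ I_c)` where
`M̃ = [M_1 ⋯ M_N]` is the horizontal concatenation of the mode matrices (of size `n × c`). -/
def liftedStoch (ℓ M N n c : ℕ) (Lt : Matrix (Fin N) (Fin (ℓ * (M * N))) ℝ)
    (Ms : Fin N → Matrix (Fin n) (Fin c) ℝ) :
    Matrix (Fin (N * n)) (Fin (ℓ * M * N * c)) ℝ :=
  kron Lt (1 : Matrix (Fin n) (Fin n) ℝ) *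
    kron (1 : Matrix (Fin (ℓ * (M * N))) (Fin (ℓ * (M * N))) ℝ) (hconcat Ms) *
    castM (by ring) (by ring)
      (kron (kron (1 : Matrix (Fin (ℓ * M)) (Fin (ℓ * M)) ℝ) (powerReducing N))
        (1 : Matrix (Fin c) (Fin c) ℝ))

lemma finCongr_self {a : ℕ} (h : a = a) (x : Fin a) : finCongr h x = x := rfl

lemma sum_fin2 {a b : ℕ} (g : Fin (a*b) → ℝ) :
    ∑ t, g t = ∑ i : Fin a, ∑ j : Fin b, g (finProdFinEquiv (i, j)) := by
  rw [← finProdFinEquiv.sum_comp g, Fintype.sum_prod_type]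

lemma idx4 {a b c d : ℕ} (h : a*b*c*d = a*(b*(c*d))) (i : Fin a) (j : Fin b) (k : Fin c) (l : Fin d) :
    finCongr h (finProdFinEquiv (finProdFinEquiv (finProdFinEquiv (i,j),k),l)) =
      finProdFinEquiv (i, finProdFinEquiv (j, finProdFinEquiv (k,l))) := by
  apply Fin.val_injective
  simp [finProdFinEquiv_apply_val]
  ring

lemma idxMid {l m n c : ℕ} (h : (l*(m*n))*(n*c) = ((l*m)*(n*n))*c) (i : Fin l) (γ : Fin m)
    (θ : Fin n) (s : Fin n) (t : Fin c) :
    finCongr h (finProdFinEquiv (finProdFinEquiv (i, finProdFinEquiv (γ,θ)), finProdFinEquiv (s,t)))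
      = finProdFinEquiv (finProdFinEquiv (finProdFinEquiv (i,γ), finProdFinEquiv (θ,s)), t) := by
  apply Fin.val_injective
  simp [finProdFinEquiv_apply_val]
  ring

lemma key (ℓ M N n c : ℕ) (f : Fin ℓ → Fin M × Fin N → Fin N)
    (L : Fin ℓ → Matrix (Fin N) (Fin (M*N)) ℝ)
    (hLf' : ∀ (i : Fin ℓ) (γ : Fin M) (θ : Fin N) (r : Fin N),
      L i r (finProdFinEquiv (γ,θ)) = if r = f i (γ,θ) then 1 else 0)
    (Ms : Fin N → Matrix (Fin n) (Fin c) ℝ)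
    (i : Fin ℓ) (γ : Fin M) (θ : Fin N) (v : Fin c → ℝ)
    (h₁ : ℓ*(M*(N*c)) = ℓ*M*N*c) (h₂ : 1*(1*(1*1)) = 1) :
    liftedStoch ℓ M N n c (hconcat L) Ms *
        castM h₁ h₂ (kron (eVec ℓ i) (kron (eVec M γ) (kron (eVec N θ) (colM v)))) =
      castM rfl (one_mul 1) (kron (eVec N (f i (γ,θ))) (colM (Ms θ *ᵥ v))) := by
  have hV : ∀ (t₁ : Fin ℓ) (t₂ : Fin M) (t₃ : Fin N) (t₄ : Fin c) (z : Fin 1),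
      castM h₁ h₂ (kron (eVec ℓ i) (kron (eVec M γ) (kron (eVec N θ) (colM v))))
        (finProdFinEquiv (finProdFinEquiv (finProdFinEquiv (t₁,t₂),t₃),t₄)) z =
      (if t₁ = i then 1 else 0) * ((if t₂ = γ then 1 else 0) * ((if t₃ = θ then 1 else 0) * v t₄)) := by
    intro t₁ t₂ t₃ t₄ z
    simp [castM, kron, eVec, colM, idx4 h₁.symm]
  have hK : ∀ (i' : Fin ℓ) (γ' : Fin M) (θ' : Fin N) (s₂ : Fin N) (s₃ : Fin c) (z : Fin 1),
      (castM (by ring : (ℓ*M)*(N*N)*c = ℓ*(M*N)*(N*c)) (by ring : (ℓ*M)*N*c = ℓ*M*N*c)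
          (kron (kron (1 : Matrix (Fin (ℓ * M)) (Fin (ℓ * M)) ℝ) (powerReducing N))
            (1 : Matrix (Fin c) (Fin c) ℝ)) *
        castM h₁ h₂ (kron (eVec ℓ i) (kron (eVec M γ) (kron (eVec N θ) (colM v)))))
        (finProdFinEquiv (finProdFinEquiv (i', finProdFinEquiv (γ',θ')), finProdFinEquiv (s₂,s₃))) z =
      (if i' = i then 1 else 0) * ((if γ' = γ then 1 else 0) *
        ((if θ' = θ then 1 else 0) * ((if s₂ = θ then 1 else 0) * v s₃))) := by
    intro i' γ' θ' s₂ s₃ z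
    rw [Matrix.mul_apply]
    simp_rw [sum_fin2, hV]
    simp only [castM, idxMid (by ring : (ℓ*(M*N))*(N*c) = ((ℓ*M)*(N*N))*c), finCongr_self,
      kron, powerReducing, Equiv.symm_apply_apply, Matrix.one_apply,
      Equiv.apply_eq_iff_eq, Prod.mk.injEq, ite_and, mul_ite, ite_mul, mul_zero, zero_mul,
      mul_one, one_mul, Finset.sum_ite_eq, Finset.sum_ite_eq', Finset.mem_univ, if_true,
      Finset.sum_const_zero]
    rw [Fintype.sum_eq_single i (fun x hx => by simp [hx])]
    rw [Fintype.sum_eq_single γ (fun x hx => by simp [hx])]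
    rw [Fintype.sum_eq_single θ (fun x hx => by simp [hx])]
    rw [Fintype.sum_eq_single s₃ (fun x hx => by simp [Ne.symm hx])]
    split_ifs <;> simp_all
  have hX2 : ∀ (i' : Fin ℓ) (γ' : Fin M) (θ' : Fin N) (b : Fin n) (z : Fin 1),
      (kron (1 : Matrix (Fin (ℓ * (M * N))) (Fin (ℓ * (M * N))) ℝ) (hconcat Ms) *
        (castM (by ring : (ℓ*M)*(N*N)*c = ℓ*(M*N)*(N*c)) (by ring : (ℓ*M)*N*c = ℓ*M*N*c)
          (kron (kron (1 : Matrix (Fin (ℓ * M)) (Fin (ℓ * M)) ℝ) (powerReducing N))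
            (1 : Matrix (Fin c) (Fin c) ℝ)) *
          castM h₁ h₂ (kron (eVec ℓ i) (kron (eVec M γ) (kron (eVec N θ) (colM v))))))
        (finProdFinEquiv (finProdFinEquiv (i', finProdFinEquiv (γ',θ')), b)) z =
      (if i' = i then 1 else 0) * ((if γ' = γ then 1 else 0) *
        ((if θ' = θ then 1 else 0) * ∑ s₃ : Fin c, Ms θ b s₃ * v s₃)) := by
    intro i' γ' θ' b z
    rw [Matrix.mul_apply]
    simp_rw [sum_fin2, hK]
    simp only [kron, hconcat, Equiv.symm_apply_apply, Matrix.one_apply,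
      Equiv.apply_eq_iff_eq, Prod.mk.injEq, ite_and, mul_ite, ite_mul, mul_zero, zero_mul,
      mul_one, one_mul, Finset.sum_const_zero]
    rw [Fintype.sum_eq_single i' (fun x hx => by simp [Ne.symm hx])]
    rw [Fintype.sum_eq_single γ' (fun x hx => by simp [Ne.symm hx])]
    rw [Fintype.sum_eq_single θ' (fun x hx => by simp [Ne.symm hx])]
    rw [Fintype.sum_eq_single θ (fun x hx => by simp [hx])]
    split_ifs <;> simp_all
  ext p z
  obtain ⟨⟨α, a⟩, rfl⟩ := finProdFinEquiv.surjective p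
  unfold liftedStoch
  erw [Matrix.mul_assoc, Matrix.mul_assoc, Matrix.mul_apply]
  simp_rw [sum_fin2, hX2]
  simp only [kron, hconcat, Equiv.symm_apply_apply, Matrix.one_apply, hLf',
    ite_and, mul_ite, ite_mul, mul_zero, zero_mul, mul_one, one_mul, Finset.sum_const_zero]
  rw [Fintype.sum_eq_single i (fun x hx => by simp [hx])]
  rw [Fintype.sum_eq_single γ (fun x hx => by simp [hx])]
  rw [Fintype.sum_eq_single θ (fun x hx => by simp [hx])]
  rw [Fintype.sum_eq_single a (fun x hx => by simp [Ne.symm hx])]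
  simp [castM, kron, eVec, colM, Matrix.mulVec, dotProduct]

/-- **Algebraic embedding of the stochastic switched system**: if `L_i` is the structure
matrix of `f_i : Fin M × Fin N → Fin N` and `L̃ = [L_1 ⋯ L_ℓ]`, then with
`𝐀̃ = (L̃ ⊗ I_n)(I_{ℓMN} ⊗ Ã)((I_{ℓM} ⊗ Φ_N) ⊗ I_n)` (and similarly `𝐁̃`, `𝐅̃`), for all
`i, γ, θ, x, u, w`:
`δ_N^{f_i(γ,θ)} ⊗ (A_θx + B_θu + F_θw)
  = 𝐀̃(δ_ℓ^i ⊗ δ_M^γ ⊗ δ_N^θ ⊗ x) + 𝐁̃(δ_ℓ^i ⊗ δ_M^γ ⊗ δ_N^θ ⊗ u)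
    + 𝐅̃(δ_ℓ^i ⊗ δ_M^γ ⊗ δ_N^θ ⊗ w)`. -/
theorem stochastic_lifted_dynamics (ℓ M N n m r : ℕ)
    (f : Fin ℓ → Fin M × Fin N → Fin N)
    (L : Fin ℓ → Matrix (Fin N) (Fin (M * N)) ℝ)
    (hL : ∀ i, IsLogicalMatrix (L i))
    (hLf : ∀ (i : Fin ℓ) (γ : Fin M) (θ : Fin N),
      L i * castM rfl (one_mul 1) (kron (eVec M γ) (eVec N θ)) = eVec N (f i (γ, θ)))
    (Lt : Matrix (Fin N) (Fin (ℓ * (M * N))) ℝ) (hLt : Lt = hconcat L)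
    (A : Fin N → Matrix (Fin n) (Fin n) ℝ) (B : Fin N → Matrix (Fin n) (Fin m) ℝ)
    (F : Fin N → Matrix (Fin n) (Fin r) ℝ)
    (i : Fin ℓ) (γ : Fin M) (θ : Fin N) (x : Fin n → ℝ) (u : Fin m → ℝ) (w : Fin r → ℝ) :
    castM rfl (one_mul 1)
        (kron (eVec N (f i (γ, θ))) (colM (A θ *ᵥ x + B θ *ᵥ u + F θ *ᵥ w))) =
      liftedStoch ℓ M N n n Lt A *
          castM (by ring) (by norm_num)
            (kron (eVec ℓ i) (kron (eVec M γ) (kron (eVec N θ) (colM x)))) +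
        liftedStoch ℓ M N n m Lt B *
          castM (by ring) (by norm_num)
            (kron (eVec ℓ i) (kron (eVec M γ) (kron (eVec N θ) (colM u)))) +
        liftedStoch ℓ M N n r Lt F *
          castM (by ring) (by norm_num)
            (kron (eVec ℓ i) (kron (eVec M γ) (kron (eVec N θ) (colM w)))) := by
  subst hLt
  have hLf' : ∀ (i : Fin ℓ) (γ : Fin M) (θ : Fin N) (r : Fin N),
      L i r (finProdFinEquiv (γ,θ)) = if r = f i (γ,θ) then 1 else 0 := by
    intro i γ θ r
    have h0 := congrFun (congrFun (hLf i γ θ) r) 0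
    rw [Matrix.mul_apply, sum_fin2] at h0
    simp only [castM, finCongr_self, kron, eVec, Equiv.symm_apply_apply, mul_ite, ite_mul,
      mul_zero, zero_mul, mul_one, one_mul, Finset.sum_const_zero] at h0
    rw [Fintype.sum_eq_single γ (fun x hx => by simp [hx]),
      Fintype.sum_eq_single θ (fun x hx => by simp [hx])] at h0
    simpa using h0
  erw [key ℓ M N n n f L hLf' A i γ θ x _ _, key ℓ M N n m f L hLf' B i γ θ u _ _,
    key ℓ M N n r f L hLf' F i γ θ w _ _]
  ext p z
  obtain ⟨⟨α, a⟩, rfl⟩ := finProdFinEquiv.surjective p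
  simp [castM, kron, eVec, colM, Matrix.add_apply, Matrix.mulVec, dotProduct,
    Equiv.symm_apply_apply, mul_add, Pi.add_apply]
end
end
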